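/- Let G be a graph and v a vertex of degree d ≥ 2 with neighbourhood {u_1,…,u_d}. Let F(G,v) be the graph obtained by deleting the d edges incident to v, adding 2d new vertices p_1,…,p_d, q_1,…,q_d, and adding edges: v–q_i for all i, p_i–q_j for all i ≠ j, and p_i–u_i for all i. Then G is a nut graph if and only if F(G,v) is a nut graph. -/

import Mathlib

open Matrix

attribute [local instance] Classical.propDecidable

/-- A nut graph: a connected simple graph whose adjacency matrix has a
one-dimensional kernel spanned by a vector with all entries nonzero. -/
def IsNutGraph {V : Type*} [Fintype V] (G : SimpleGraph V) : Prop :=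
  G.Connected ∧ ∃ x : V → ℝ,
    G.adjMatrix ℝ *ᵥ x = 0 ∧ (∀ v, x v ≠ 0) ∧
    ∀ y : V → ℝ, G.adjMatrix ℝ *ᵥ y = 0 → ∃ c : ℝ, y = c • x

/-- The Fowler construction `F(G, v)`: given a vertex `v` whose neighbours are
`u 0, …, u (d-1)`, delete the `d` edges incident with `v`, add `2d` new
vertices `p i = inr (i, 0)` and `q i = inr (i, 1)`, and add the edges
`v–(q i)` for all `i`, `(p i)–(q j)` for all `i ≠ j`, and `(p i)–(u i)`
for all `i`. -/
def fowlerExt {V : Type*} (G : SimpleGraph V) (v : V) (d : ℕ) (u : Fin d → V) :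
    SimpleGraph (V ⊕ Fin d × Fin 2) where
  Adj a b := match a, b with
    | Sum.inl a, Sum.inl b => G.Adj a b ∧ a ≠ v ∧ b ≠ v
    | Sum.inl a, Sum.inr (i, c) => (a = v ∧ c = 1) ∨ (a = u i ∧ c = 0)
    | Sum.inr (i, c), Sum.inl a => (a = v ∧ c = 1) ∨ (a = u i ∧ c = 0)
    | Sum.inr (i, c), Sum.inr (j, c') => i ≠ j ∧ c ≠ c'
  symm := by
    constructor
    rintro (a | ⟨i, c⟩) (b | ⟨j, c'⟩) h
    · exact ⟨h.1.symm, h.2.2, h.2.1⟩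
    · exact h
    · exact h
    · exact ⟨h.1.symm, h.2.symm⟩
  loopless := by
    constructor
    rintro (a | ⟨i, c⟩) h
    · exact G.ne_of_adj h.1 rfl
    · exact h.1 rfl

namespace FowlerAux

/-- Transport reachability along a map sending edges to reachability. -/
lemma reach_map {W W' : Type*} {F : SimpleGraph W} {H : SimpleGraph W'} (f : W → W')
    (hf : ∀ a b, F.Adj a b → H.Reachable (f a) (f b)) {a b : W} (h : F.Reachable a b) :
    H.Reachable (f a) (f b) := by
  obtain ⟨p⟩ := h
  induction p with
  | nil => exact SimpleGraph.Reachable.refl _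
  | cons h' p ih => exact (hf _ _ h').trans ih

/-- Extension of a kernel vector of `G` to a kernel vector of `F(G,v)`. -/
noncomputable def fext {V : Type*} (G : SimpleGraph V) (v : V) (d : ℕ) (u : Fin d → V)
    (x : V → ℝ) : V ⊕ Fin d × Fin 2 → ℝ
  | Sum.inl w => if w = v then (1 - (d : ℝ)) * x v else x w
  | Sum.inr (i, c) => if c = 0 then x v else x (u i)

/-- Restriction of a kernel vector of `F(G,v)` to a kernel vector of `G`. -/
noncomputable def fres {V : Type*} (_G : SimpleGraph V) (v : V) (d : ℕ) (_u : Fin d → V)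
    (h0 : 0 < d) (y : V ⊕ Fin d × Fin 2 → ℝ) : V → ℝ :=
  fun w => if w = v then y (Sum.inr (⟨0, h0⟩, 0)) else y (Sum.inl w)

section

variable {V : Type*} [Fintype V] (G : SimpleGraph V) (v : V) (d : ℕ) (u : Fin d → V)

lemma fext_p (x : V → ℝ) (i : Fin d) : fext G v d u x (Sum.inr (i, 0)) = x v := by
  simp [fext]

lemma fext_q (x : V → ℝ) (i : Fin d) : fext G v d u x (Sum.inr (i, 1)) = x (u i) := by
  simp [fext]

lemma fext_v (x : V → ℝ) : fext G v d u x (Sum.inl v) = (1 - (d : ℝ)) * x v := by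
  simp [fext]

lemma fext_w (x : V → ℝ) {w : V} (hw : w ≠ v) : fext G v d u x (Sum.inl w) = x w := by
  simp [fext, hw]

lemma fext_smul (x : V → ℝ) (c : ℝ) : fext G v d u (c • x) = c • fext G v d u x := by
  funext t
  obtain (w | ⟨i, e⟩) := t <;> simp [fext, mul_ite] <;> split_ifs <;> ring

lemma frow_inl (y : V ⊕ Fin d × Fin 2 → ℝ) (a : V) :
    ((fowlerExt G v d u).adjMatrix ℝ *ᵥ y) (Sum.inl a) =
      (∑ b : V, if G.Adj a b ∧ a ≠ v ∧ b ≠ v then y (Sum.inl b) else 0)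
      + ∑ i : Fin d, ((if a = u i then y (Sum.inr (i, 0)) else 0)
          + (if a = v then y (Sum.inr (i, 1)) else 0)) := by
  simp only [mulVec, dotProduct, SimpleGraph.adjMatrix_apply]
  simp [mulVec, dotProduct, ite_mul, Fintype.sum_sum_type, Fintype.sum_prod_type,
    Fin.sum_univ_two, fowlerExt, SimpleGraph.adjMatrix_apply]
  refine Finset.sum_congr rfl fun b _ => ?_
  split_ifs with h <;> simp [h]

lemma frow_p (y : V ⊕ Fin d × Fin 2 → ℝ) (i : Fin d) :
    ((fowlerExt G v d u).adjMatrix ℝ *ᵥ y) (Sum.inr (i, 0)) =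
      y (Sum.inl (u i)) + ∑ j : Fin d, if j ≠ i then y (Sum.inr (j, 1)) else 0 := by
  simp [mulVec, dotProduct, ite_mul, Fintype.sum_sum_type, Fintype.sum_prod_type,
    Fin.sum_univ_two, fowlerExt, SimpleGraph.adjMatrix_apply, ne_comm]

lemma frow_q (y : V ⊕ Fin d × Fin 2 → ℝ) (i : Fin d) :
    ((fowlerExt G v d u).adjMatrix ℝ *ᵥ y) (Sum.inr (i, 1)) =
      y (Sum.inl v) + ∑ j : Fin d, if j ≠ i then y (Sum.inr (j, 0)) else 0 := by
  simp [mulVec, dotProduct, ite_mul, Fintype.sum_sum_type, Fintype.sum_prod_type,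
    Fin.sum_univ_two, fowlerExt, SimpleGraph.adjMatrix_apply, ne_comm]

lemma grow (x : V → ℝ) (w : V) :
    (G.adjMatrix ℝ *ᵥ x) w = ∑ b : V, if G.Adj w b then x b else 0 := by
  simp [mulVec, dotProduct, ite_mul]

/-- Sum of a punctured family. -/
lemma sum_ne (f : Fin d → ℝ) (i : Fin d) :
    (∑ j : Fin d, if j ≠ i then f j else 0) = (∑ j : Fin d, f j) - f i := by
  have h : ∀ j : Fin d, (if j ≠ i then f j else 0) = f j - (if j = i then f j else 0) := by
    intro j; split_ifs with h h' h' <;> simp_all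
  rw [Finset.sum_congr rfl fun j _ => h j, Finset.sum_sub_distrib,
    Finset.sum_ite_eq' Finset.univ i f]
  simp

variable {G v d u}
variable (hd : 2 ≤ d) (hu : Function.Injective u)
    (hN : ∀ w : V, G.Adj v w ↔ ∃ i, u i = w)

include hN in
lemma u_ne_v (i : Fin d) : u i ≠ v := by
  intro h
  exact G.loopless.irrefl v (h ▸ ((hN (u i)).2 ⟨i, rfl⟩))

include hu hN in
lemma sum_u (x : V → ℝ) :
    (G.adjMatrix ℝ *ᵥ x) v = ∑ i : Fin d, x (u i) := by
  rw [grow]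
  rw [show (∑ b : V, if G.Adj v b then x b else 0)
      = ∑ b : V, if b ∈ Finset.univ.image u then x b else 0 from
    Finset.sum_congr rfl fun b _ => by
      simp only [Finset.mem_image, Finset.mem_univ, true_and, hN b]]
  rw [← Finset.sum_filter, Finset.filter_mem_eq_inter, Finset.univ_inter,
    Finset.sum_image (fun a _ b _ h => hu h)]

include hu hN in
lemma sum_indicator (a : V) (c : ℝ) :
    (∑ i : Fin d, if a = u i then c else 0) = if G.Adj v a then c else 0 := by
  by_cases hadj : G.Adj v a
  · obtain ⟨i0, hi0⟩ := (hN a).1 hadj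
    rw [if_pos hadj]
    have hpt : ∀ i : Fin d, (if a = u i then c else 0) = if i = i0 then c else 0 := by
      intro i
      by_cases h : i = i0
      · subst h; rw [if_pos hi0.symm, if_pos rfl]
      · rw [if_neg (fun h' : a = u i => h (hu (h'.symm.trans hi0.symm))), if_neg h]
    rw [Finset.sum_congr rfl fun i _ => hpt i,
      Finset.sum_ite_eq' Finset.univ i0 (fun _ => c), if_pos (Finset.mem_univ i0)]
  · rw [if_neg hadj]
    refine Finset.sum_eq_zero fun i _ => ?_
    exact if_neg fun h => hadj ((hN a).2 ⟨i, h.symm⟩)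

/-- Splitting the G-row at a vertex `a ≠ v` over the partial sum in F. -/
lemma split_sum (x : V → ℝ) (z : V ⊕ Fin d × Fin 2 → ℝ)
    (hxz : ∀ w : V, w ≠ v → z (Sum.inl w) = x w) (a : V) (hav : a ≠ v) :
    (∑ b : V, if G.Adj a b ∧ a ≠ v ∧ b ≠ v then z (Sum.inl b) else 0)
    = (∑ b : V, if G.Adj a b then x b else 0) - (if G.Adj a v then x v else 0) := by
  rw [show (∑ b : V, if G.Adj a b then x b else 0)
      = ∑ b : V, ((if G.Adj a b ∧ a ≠ v ∧ b ≠ v then z (Sum.inl b) else 0)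
        + (if b = v then (if G.Adj a v then x v else 0) else 0)) from
    Finset.sum_congr rfl fun b _ => by
      by_cases hbv : b = v
      · subst hbv
        simp [hav]
      · by_cases hab : G.Adj a b
        · simp [hab, hav, hbv, hxz b hbv]
        · simp [hab, hbv]]
  rw [Finset.sum_add_distrib, Finset.sum_ite_eq' Finset.univ v
    (fun _ => if G.Adj a v then x v else 0)]
  simp

include hu hN in
lemma fext_ker (x : V → ℝ) (hx : G.adjMatrix ℝ *ᵥ x = 0) :
    (fowlerExt G v d u).adjMatrix ℝ *ᵥ fext G v d u x = 0 := by
  have hsum : (∑ i : Fin d, x (u i)) = 0 := by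
    rw [← sum_u hu hN x, hx]; rfl
  funext t
  obtain (a | ⟨i, c⟩) := t
  · rw [Pi.zero_apply, frow_inl]
    by_cases hav : a = v
    · subst hav
      rw [Finset.sum_eq_zero (fun b _ => if_neg (by tauto)), zero_add,
        Finset.sum_congr rfl (fun i _ => by
          rw [if_neg (Ne.symm (u_ne_v hN i)), if_pos rfl, fext_q, zero_add]), hsum]
    · have hrow : (∑ b : V, if G.Adj a b then x b else 0) = 0 := by
        rw [← grow, hx]; rfl
      have hfin : (∑ i : Fin d, ((if a = u i then fext G v d u x (Sum.inr (i, 0)) else 0)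
          + (if a = v then fext G v d u x (Sum.inr (i, 1)) else 0)))
          = if G.Adj v a then x v else 0 := by
        have h1 : ∀ i : Fin d, ((if a = u i then fext G v d u x (Sum.inr (i, 0)) else 0)
            + (if a = v then fext G v d u x (Sum.inr (i, 1)) else 0))
            = if a = u i then x v else 0 := fun i => by rw [if_neg hav, add_zero, fext_p]
        rw [Finset.sum_congr rfl fun i _ => h1 i, sum_indicator hu hN a (x v)]
      rw [hfin, split_sum x (fext G v d u x) (fun w hw => fext_w G v d u x hw) a hav, hrow]
      by_cases h : G.Adj a v
      · rw [if_pos h, if_pos (G.adj_symm h)]; ring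
      · rw [if_neg h, if_neg (fun h' => h (G.adj_symm h'))]; ring
  · obtain (rfl | rfl) : c = 0 ∨ c = 1 := by omega
    · rw [Pi.zero_apply, frow_p, sum_ne, fext_w G v d u x (u_ne_v hN i),
        Finset.sum_congr rfl (fun j _ => fext_q G v d u x j), fext_q, hsum]
      ring
    · rw [Pi.zero_apply, frow_q, sum_ne, fext_v,
        Finset.sum_congr rfl (fun j _ => fext_p G v d u x j), fext_p,
        Finset.sum_const, Finset.card_univ, Fintype.card_fin, nsmul_eq_mul]
      ring

section rec

variable (h0 : 0 < d) (y : V ⊕ Fin d × Fin 2 → ℝ)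
    (hy : (fowlerExt G v d u).adjMatrix ℝ *ᵥ y = 0)

include hy in
lemma rec_p (i : Fin d) : y (Sum.inr (i, 0)) = y (Sum.inl v) + ∑ j : Fin d, y (Sum.inr (j, 0)) := by
  have h := congrFun hy (Sum.inr (i, 1))
  rw [frow_q, sum_ne, Pi.zero_apply] at h
  linarith

include hy in
lemma rec_p' (i j : Fin d) : y (Sum.inr (i, 0)) = y (Sum.inr (j, 0)) := by
  rw [rec_p y hy i, rec_p y hy j]

include hy in
lemma rec_v (i : Fin d) : y (Sum.inl v) = (1 - (d : ℝ)) * y (Sum.inr (i, 0)) := by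
  have h1 := rec_p y hy i
  have h2 : (∑ j : Fin d, y (Sum.inr (j, 0))) = (d : ℝ) * y (Sum.inr (i, 0)) := by
    rw [Finset.sum_congr rfl (fun j _ => rec_p' y hy j i),
      Finset.sum_const, Finset.card_univ, Fintype.card_fin, nsmul_eq_mul]
  rw [h2] at h1
  linarith

include hN hy in
lemma sum_q_zero : (∑ j : Fin d, y (Sum.inr (j, 1))) = 0 := by
  have h := congrFun hy (Sum.inl v)
  rw [frow_inl, Pi.zero_apply] at h
  rw [Finset.sum_eq_zero (fun b _ => if_neg (by tauto)), zero_add] at h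
  have h2 : (∑ i : Fin d, ((if v = u i then y (Sum.inr (i, 0)) else 0)
      + (if v = v then y (Sum.inr (i, 1)) else 0))) = ∑ j : Fin d, y (Sum.inr (j, 1)) :=
    Finset.sum_congr rfl fun i _ => by
      rw [if_neg (Ne.symm (u_ne_v hN i)), if_pos rfl, zero_add]
  rw [← h2]
  exact h

include hN hy in
lemma rec_q (i : Fin d) : y (Sum.inr (i, 1)) = y (Sum.inl (u i)) := by
  have h := congrFun hy (Sum.inr (i, 0))
  rw [frow_p, sum_ne, Pi.zero_apply, sum_q_zero hN y hy] at h
  linarith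

include hu hN h0 hy in
lemma fres_ker : G.adjMatrix ℝ *ᵥ fres G v d u h0 y = 0 := by
  funext w
  rw [Pi.zero_apply]
  by_cases hwv : w = v
  · rw [hwv, sum_u hu hN]
    have h1 : ∀ i : Fin d, fres G v d u h0 y (u i) = y (Sum.inr (i, 1)) := fun i => by
      rw [show fres G v d u h0 y (u i) = y (Sum.inl (u i)) from if_neg (u_ne_v hN i),
        ← rec_q hN y hy i]
    rw [Finset.sum_congr rfl fun i _ => h1 i]
    exact sum_q_zero hN y hy
  · have h := congrFun hy (Sum.inl w)
    rw [frow_inl, Pi.zero_apply] at h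
    have hfin : (∑ i : Fin d, ((if w = u i then y (Sum.inr (i, 0)) else 0)
        + (if w = v then y (Sum.inr (i, 1)) else 0)))
        = if G.Adj v w then fres G v d u h0 y v else 0 := by
      have h1 : ∀ i : Fin d, ((if w = u i then y (Sum.inr (i, 0)) else 0)
          + (if w = v then y (Sum.inr (i, 1)) else 0))
          = if w = u i then fres G v d u h0 y v else 0 := fun i => by
        rw [if_neg hwv, add_zero, rec_p' y hy i ⟨0, h0⟩,
          show y (Sum.inr (⟨0, h0⟩, 0)) = fres G v d u h0 y v from (if_pos rfl).symm]
      rw [Finset.sum_congr rfl fun i _ => h1 i, sum_indicator hu hN w (fres G v d u h0 y v)]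
    rw [hfin, split_sum (fres G v d u h0 y) y (fun b hb => (if_neg hb).symm) w hwv] at h
    rw [grow]
    by_cases hadj : G.Adj w v
    · rw [if_pos hadj, if_pos (G.adj_symm hadj)] at h
      linarith
    · rw [if_neg hadj, if_neg (fun h' => hadj (G.adj_symm h'))] at h
      linarith

include hN h0 hy in
lemma fres_ext : y = fext G v d u (fres G v d u h0 y) := by
  funext t
  obtain (w | ⟨i, c⟩) := t
  · by_cases hwv : w = v
    · rw [hwv, fext_v, show fres G v d u h0 y v = y (Sum.inr (⟨0, h0⟩, 0)) from if_pos rfl]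
      exact rec_v y hy ⟨0, h0⟩
    · rw [fext_w G v d u _ hwv]
      exact (if_neg hwv).symm
  · obtain (rfl | rfl) : c = 0 ∨ c = 1 := by omega
    · rw [fext_p, show fres G v d u h0 y v = y (Sum.inr (⟨0, h0⟩, 0)) from if_pos rfl]
      exact rec_p' y hy i ⟨0, h0⟩
    · rw [fext_q, show fres G v d u h0 y (u i) = y (Sum.inl (u i)) from if_neg (u_ne_v hN i),
        ← rec_q hN y hy i]

end rec

include hd hN in
lemma conn_forward (hG : G.Connected) : (fowlerExt G v d u).Connected := by
  have step : ∀ a b : V, G.Adj a b → (fowlerExt G v d u).Reachable (Sum.inl a) (Sum.inl b) := by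
    have key : ∀ b : V, G.Adj v b → (fowlerExt G v d u).Reachable (Sum.inl v) (Sum.inl b) := by
      intro b hb
      obtain ⟨i, rfl⟩ := (hN b).1 hb
      obtain ⟨j, hj⟩ := Fintype.exists_ne_of_one_lt_card
        (by rw [Fintype.card_fin]; omega) i
      have e1 : (fowlerExt G v d u).Adj (Sum.inl v) (Sum.inr (j, 1)) := Or.inl ⟨rfl, rfl⟩
      have e2 : (fowlerExt G v d u).Adj (Sum.inr (j, 1)) (Sum.inr (i, 0)) := ⟨hj, by decide⟩
      have e3 : (fowlerExt G v d u).Adj (Sum.inr (i, 0)) (Sum.inl (u i)) := Or.inr ⟨rfl, rfl⟩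
      exact (e1.reachable.trans e2.reachable).trans e3.reachable
    intro a b hab
    by_cases hav : a = v
    · subst hav; exact key b hab
    · by_cases hbv : b = v
      · subst hbv; exact (key a (G.adj_symm hab)).symm
      · exact (show (fowlerExt G v d u).Adj (Sum.inl a) (Sum.inl b) from ⟨hab, hav, hbv⟩).reachable
  have reach_inl : ∀ a b : V, G.Reachable a b → (fowlerExt G v d u).Reachable (Sum.inl a) (Sum.inl b) :=
    fun a b h => reach_map Sum.inl step h
  have to_v : ∀ t : V ⊕ Fin d × Fin 2, (fowlerExt G v d u).Reachable t (Sum.inl v) := by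
    rintro (a | ⟨i, c⟩)
    · exact reach_inl a v (hG.preconnected a v)
    · obtain (rfl | rfl) : c = 0 ∨ c = 1 := by omega
      · exact (show (fowlerExt G v d u).Adj (Sum.inr (i, 0)) (Sum.inl (u i)) from Or.inr ⟨rfl, rfl⟩).reachable.trans
          (reach_inl (u i) v (hG.preconnected (u i) v))
      · exact (show (fowlerExt G v d u).Adj (Sum.inr (i, 1)) (Sum.inl v) from Or.inl ⟨rfl, rfl⟩).reachable
  haveI : Nonempty (V ⊕ Fin d × Fin 2) := ⟨Sum.inl v⟩
  exact ⟨fun s t => (to_v s).trans (to_v t).symm⟩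

include hN in
lemma conn_backward (hF : (fowlerExt G v d u).Connected) : G.Connected := by
  set F := fowlerExt G v d u with hF'
  let f : V ⊕ Fin d × Fin 2 → V := Sum.elim id (fun p => if p.2 = 0 then u p.1 else v)
  have hf : ∀ s t, F.Adj s t → G.Reachable (f s) (f t) := by
    rintro (a | ⟨i, c⟩) (b | ⟨j, c'⟩) h
    · exact h.1.reachable
    · rcases h with ⟨rfl, rfl⟩ | ⟨rfl, rfl⟩
      · simp only [f, Sum.elim_inl, Sum.elim_inr]
        norm_num
      · simp only [f, Sum.elim_inl, Sum.elim_inr]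
        norm_num
    · rcases h with ⟨rfl, rfl⟩ | ⟨rfl, rfl⟩
      · simp only [f, Sum.elim_inl, Sum.elim_inr]
        norm_num
      · simp only [f, Sum.elim_inl, Sum.elim_inr]
        norm_num
    · obtain ⟨hij, hcc⟩ := h
      obtain (⟨rfl, rfl⟩ | ⟨rfl, rfl⟩) : (c = 0 ∧ c' = 1) ∨ (c = 1 ∧ c' = 0) := by omega
      · simpa [f] using ((hN (u i)).2 ⟨i, rfl⟩).symm.reachable
      · simpa [f] using ((hN (u j)).2 ⟨j, rfl⟩).reachable
  haveI : Nonempty V := ⟨v⟩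
  refine ⟨fun a b => ?_⟩
  have := reach_map f hf (hF.preconnected (Sum.inl a) (Sum.inl b))
  simpa [f] using this

end

end FowlerAux

open FowlerAux

/-- Let `v` be a vertex of degree `d ≥ 2` of `G`, with neighbourhood
`{u 0, …, u (d-1)}`.  Then `G` is a nut graph if and only if the
Fowler construction `F(G, v)` is a nut graph. -/
theorem fowlerExt_nut_iff {V : Type*} [Fintype V] (G : SimpleGraph V) (v : V)
    (d : ℕ) (hd : 2 ≤ d) (u : Fin d → V) (hu : Function.Injective u)
    (hN : ∀ w : V, G.Adj v w ↔ ∃ i, u i = w) :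
    IsNutGraph G ↔ IsNutGraph (fowlerExt G v d u) := by
  have h0 : 0 < d := by omega
  have hd1 : (1 : ℝ) - (d : ℝ) ≠ 0 := by
    have : (2 : ℝ) ≤ (d : ℝ) := by exact_mod_cast hd
    intro h
    linarith
  constructor
  · rintro ⟨hc, x, hx, hxne, hxspan⟩
    refine ⟨conn_forward hd hN hc, fext G v d u x, fext_ker hu hN x hx, ?_, ?_⟩
    · rintro (w | ⟨i, c⟩)
      · by_cases hwv : w = v
        · rw [hwv, fext_v]
          exact mul_ne_zero hd1 (hxne v)
        · rw [fext_w G v d u x hwv]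
          exact hxne w
      · obtain (rfl | rfl) : c = 0 ∨ c = 1 := by omega
        · rw [fext_p]; exact hxne v
        · rw [fext_q]; exact hxne (u i)
    · intro y hy
      obtain ⟨c, hc'⟩ := hxspan (fres G v d u h0 y) (fres_ker hu hN h0 y hy)
      exact ⟨c, by rw [fres_ext hN h0 y hy, hc', fext_smul]⟩
  · rintro ⟨hc, y, hy, hyne, hyspan⟩
    have hrk := fres_ker hu hN h0 y hy
    refine ⟨conn_backward hN hc, fres G v d u h0 y, hrk, ?_, ?_⟩
    · intro w
      by_cases hwv : w = v
      · rw [hwv, show fres G v d u h0 y v = y (Sum.inr (⟨0, h0⟩, 0)) from if_pos rfl]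
        exact hyne _
      · rw [show fres G v d u h0 y w = y (Sum.inl w) from if_neg hwv]
        exact hyne _
    · intro x hx
      obtain ⟨c, hc'⟩ := hyspan (fext G v d u x) (fext_ker hu hN x hx)
      refine ⟨c, funext fun w => ?_⟩
      by_cases hwv : w = v
      · rw [hwv]
        have := congrFun hc' (Sum.inr (⟨0, h0⟩, 0))
        rw [fext_p] at this
        rw [Pi.smul_apply, smul_eq_mul,
          show fres G v d u h0 y v = y (Sum.inr (⟨0, h0⟩, 0)) from if_pos rfl]
        simpa using this
      · have := congrFun hc' (Sum.inl w)
        rw [fext_w G v d u x hwv] at this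
        rw [Pi.smul_apply, smul_eq_mul,
          show fres G v d u h0 y w = y (Sum.inl w) from if_neg hwv]
        simpa using this
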